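/- In the ring of formal power series in z with coefficients in ℂ[x], the one-variable c-free Appell polynomials satisfy the generating function identity (1 − x·z + Σ_{k≥1} rₖzᵏ) · (1 + Σ_{n≥1} Aₙ(x)·zⁿ) = 1 + Σ_{k≥1} rₖzᵏ − Σ_{k≥1} sₖzᵏ. -/
import Mathlib


open Polynomial

/-- The one-variable c-free Appell polynomials: `A₀ = 1` and
`Aₙ₊₁ = x·Aₙ − Σ_{j=1}^{n} rⱼ·A_{n+1−j} − s_{n+1}·1`. -/
noncomputable def cfAppell (r s : ℕ → ℂ) : ℕ → Polynomial ℂ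
  | 0 => 1
  | n + 1 =>
      X * cfAppell r s n
        - ∑ j ∈ Finset.range n, C (r (j + 1)) * cfAppell r s (n - j)
        - C (s (n + 1))
  termination_by n => n
  decreasing_by all_goals omega

lemma cfAppell_zero (r s : ℕ → ℂ) : cfAppell r s 0 = 1 := by
  rw [cfAppell]

lemma cfAppell_succ (r s : ℕ → ℂ) (n : ℕ) :
    cfAppell r s (n + 1) =
      X * cfAppell r s n
        - ∑ j ∈ Finset.range n, C (r (j + 1)) * cfAppell r s (n - j)
        - C (s (n + 1)) := by
  rw [cfAppell]

/-- in `(ℂ[x])[[z]]`, the c-free Appell polynomials satisfy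
`(1 − x·z + Σ_{k≥1} rₖ zᵏ) · (1 + Σ_{n≥1} Aₙ(x) zⁿ) = 1 + Σ_{k≥1} rₖ zᵏ − Σ_{k≥1} sₖ zᵏ`. -/
theorem cfAppell_generating_function (r s : ℕ → ℂ) :
    (PowerSeries.mk fun k =>
        if k = 0 then 1 else C (r k) - if k = 1 then (X : Polynomial ℂ) else 0) *
      (PowerSeries.mk fun n => cfAppell r s n) =
    PowerSeries.mk fun k =>
      if k = 0 then 1 else C (r k) - C (s k) := by
  ext n
  rw [PowerSeries.coeff_mul, Finset.Nat.sum_antidiagonal_eq_sum_range_succ_mk]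
  cases n with
  | zero => simp [cfAppell_zero]
  | succ m =>
    rw [Finset.sum_range_succ']
    simp only [PowerSeries.coeff_mk, Nat.succ_sub_succ, Nat.add_eq_zero, and_false,
      if_false, one_ne_zero, Nat.add_left_cancel_iff, if_pos rfl, one_mul,
      Nat.sub_zero]
    rw [cfAppell_succ]
    have h1 : ∀ j ∈ Finset.range (m + 1),
        (C (r (j + 1)) - if j + 1 = 1 then (X : Polynomial ℂ) else 0) * cfAppell r s (m - j)
        = C (r (j + 1)) * cfAppell r s (m - j)
          - (if j = 0 then X * cfAppell r s m else 0) := by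
      intro j _
      rcases Nat.eq_zero_or_pos j with hj | hj
      · subst hj; simp [sub_mul]
      · have : j + 1 ≠ 1 := by omega
        have hj0 : j ≠ 0 := by omega
        simp [this, hj0]
    rw [Finset.sum_congr rfl h1, Finset.sum_sub_distrib, Finset.sum_ite_eq'
      (Finset.range (m+1)) 0 (fun _ => X * cfAppell r s m)]
    simp only [Finset.mem_range, Nat.succ_pos, if_pos]
    rw [Finset.sum_range_succ]
    simp [cfAppell_zero]
    ring
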